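/- arXiv:2305.08798 — 2 statements merged into one kernel-verified Lean document; each statement's English description precedes it below -/
import Mathlib

section
/- For every integer ℓ≥2 and every commutative ring R with unity, the R-algebra homomorphism F: R_{0,[ℓ]} → R_{0,[ℓ+1]} defined by F(ℝE_{J,K}) = ℝẼ⁺_{J,K} + ℝẼ⁻_{J,K} and F(ℝD_{I;J,K}) = ℝD̃⁺_{I;J,K} + ℝD̃⁰_{I;J,K} + ℝD̃⁻_{I;J,K} satisfies F(I_{0,[ℓ]}) ⊆ I_{0,[ℓ+1]}. -/
open MvPolynomial Finset TensorProduct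

noncomputable section

/-- `[ℓ] = {1, …, ℓ}`. -/
abbrev Iset (n : ℕ) : Finset ℕ := Finset.Icc 1 n

/-! ### The "complex" rings `R_S = R[(D_{J,K})_{{J,K} ∈ P•(S)}]`.
An unordered pair `{J,K}` with `J ⊔ K = S` and `2 ≤ |J| ≤ |S|-2` is represented by
its unique member containing `min S`. -/

/-- Index type for the variables `D_{J,K}`, `{J,K} ∈ P•(S)`: the canonical member
of the pair is the one whose minimum is `min S`. -/
abbrev CxIdx (S : Finset ℕ) : Type :=
  {J : Finset ℕ // J ⊆ S ∧ 2 ≤ J.card ∧ 2 ≤ (S \ J).card ∧ J.min = S.min}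

/-- The polynomial ring `R_S` on the variables `D_{J,K}`, `{J,K} ∈ P•(S)`. -/
abbrev CxRing (R : Type) [CommRing R] (S : Finset ℕ) : Type := MvPolynomial (CxIdx S) R

def cxXv (R : Type) [CommRing R] (S J : Finset ℕ) : CxRing R S :=
  if h : J ⊆ S ∧ 2 ≤ J.card ∧ 2 ≤ (S \ J).card ∧ J.min = S.min then X ⟨J, h⟩ else 0

/-- The variable `D_{J,K}` of `R_S` (equal to `0` if `{J,K} ∉ P•(S)`). -/
def cxD (R : Type) [CommRing R] (S J K : Finset ℕ) : CxRing R S :=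
  if Disjoint J K ∧ J ∪ K = S then (if J.min ≤ K.min then cxXv R S J else cxXv R S K)
  else 0

/-- `{J,K} ⋂̸ {J',K'}`:  `J ⊄ J'`, `J ⊄ K'`, `J' ⊄ J` and `K' ⊄ J`. -/
abbrev NcapCx (J J' K' : Finset ℕ) : Prop :=
  ¬ J ⊆ J' ∧ ¬ J ⊆ K' ∧ ¬ J' ⊆ J ∧ ¬ K' ⊆ J

/-- The element `R^S_{abcd}`. -/
def cxRel (R : Type) [CommRing R] (S : Finset ℕ) (a b c d : ℕ) : CxRing R S :=
  (∑ J ∈ S.powerset,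
    if 2 ≤ J.card ∧ 2 ≤ (S \ J).card ∧ a ∈ J ∧ b ∈ J ∧ c ∈ S \ J ∧ d ∈ S \ J
    then cxD R S J (S \ J) else 0)
  - ∑ J ∈ S.powerset,
    if 2 ≤ J.card ∧ 2 ≤ (S \ J).card ∧ a ∈ J ∧ c ∈ J ∧ b ∈ S \ J ∧ d ∈ S \ J
    then cxD R S J (S \ J) else 0

/-- The ideal `I_S ⊂ R_S`. -/
def cxIdeal (R : Type) [CommRing R] (S : Finset ℕ) : Ideal (CxRing R S) :=
  Ideal.span (
    {x | ∃ J K J' K' : Finset ℕ,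
      (Disjoint J K ∧ J ∪ K = S ∧ 2 ≤ J.card ∧ 2 ≤ K.card) ∧
      (Disjoint J' K' ∧ J' ∪ K' = S ∧ 2 ≤ J'.card ∧ 2 ≤ K'.card) ∧
      NcapCx J J' K' ∧ x = cxD R S J K * cxD R S J' K'} ∪
    {x | ∃ a b c d : ℕ, a ∈ S ∧ b ∈ S ∧ c ∈ S ∧ d ∈ S ∧ a ≠ b ∧ c ≠ d ∧
      x = cxRel R S a b c d})

/-- The homomorphism `F : R_{[ℓ]} → R_{[ℓ+1]}`, `D_{J,K} ↦ D_{J∪{ℓ+1},K} + D_{J,K∪{ℓ+1}}`. -/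
def Fcx (R : Type) [CommRing R] (ℓ : ℕ) : CxRing R (Iset ℓ) →ₐ[R] CxRing R (Iset (ℓ + 1)) :=
  aeval fun i =>
    cxD R (Iset (ℓ + 1)) (i.1 ∪ {ℓ + 1}) (Iset ℓ \ i.1)
    + cxD R (Iset (ℓ + 1)) i.1 ((Iset ℓ \ i.1) ∪ {ℓ + 1})

/-- The homomorphism `F_P : R_{{nd}⊔B} → R_{[ℓ]}`, `D_{J',K'} ↦ D_{P∪(J'-{nd}),K'}` for
`nd ∈ J'`; here `nd = 0`. -/
def FJcx (R : Type) [CommRing R] (ℓ : ℕ) (P B : Finset ℕ) :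
    CxRing R (insert 0 B) →ₐ[R] CxRing R (Iset ℓ) :=
  aeval fun i => cxD R (Iset ℓ) (P ∪ i.1.erase 0) (insert 0 B \ i.1)

/-- The homomorphism `F_{J,K} : R_{{nd}⊔J} ⊗ R_{{nd}⊔K} → R_{[ℓ]}` acting by `F_K` on the
first factor and by `F_J` on the second. -/
def FJKcx (R : Type) [CommRing R] (ℓ : ℕ) (J K : Finset ℕ) :
    TensorProduct R (CxRing R (insert 0 J)) (CxRing R (insert 0 K)) →ₐ[R] CxRing R (Iset ℓ) :=
  Algebra.TensorProduct.productMap (FJcx R ℓ K J) (FJcx R ℓ J K)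

/-- The submodule `A ⊗ I_B + I_A ⊗ B` of `A ⊗_R B`. -/
def mixedSub (R : Type) [CommRing R] {A B : Type} [CommRing A] [CommRing B]
    [Algebra R A] [Algebra R B] (IA : Ideal A) (IB : Ideal B) :
    Submodule R (TensorProduct R A B) :=
  Submodule.span R
    ({x | ∃ p q, q ∈ IB ∧ x = p ⊗ₜ[R] q} ∪ {x | ∃ p q, p ∈ IA ∧ x = p ⊗ₜ[R] q})

/-! ### The "real" rings `R_{0,S}` with variables `ℝE_{J,K}`, `{J,K} ∈ P(S)`, and
`ℝD_{I;J,K}`, `(I,{J,K}) ∈ P̃•(S)`.  The unordered pair `{J,K}` is represented by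
its member whose minimum equals the minimum of `J ∪ K`. -/

abbrev EIdx (S : Finset ℕ) : Type := {J : Finset ℕ // J ⊆ S ∧ J.min = S.min}

abbrev DIdx (S : Finset ℕ) : Type :=
  {p : Finset ℕ × Finset ℕ //
    p.1 ⊆ S ∧ p.2 ⊆ S \ p.1 ∧ 1 ≤ p.1.card ∧ 2 ≤ (S \ p.1).card ∧ p.2.min = (S \ p.1).min}

/-- The polynomial ring `R_{0,S}`. -/
abbrev RRing (R : Type) [CommRing R] (S : Finset ℕ) : Type :=
  MvPolynomial (EIdx S ⊕ DIdx S) R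

def reXe (R : Type) [CommRing R] (S J : Finset ℕ) : RRing R S :=
  if h : J ⊆ S ∧ J.min = S.min then X (Sum.inl ⟨J, h⟩) else 0

/-- The variable `ℝE_{J,K}` of `R_{0,S}` (equal to `0` if `{J,K} ∉ P(S)`). -/
def reE (R : Type) [CommRing R] (S J K : Finset ℕ) : RRing R S :=
  if Disjoint J K ∧ J ∪ K = S then (if J.min ≤ K.min then reXe R S J else reXe R S K)
  else 0

def reXd (R : Type) [CommRing R] (S I J : Finset ℕ) : RRing R S :=
  if h : I ⊆ S ∧ J ⊆ S \ I ∧ 1 ≤ I.card ∧ 2 ≤ (S \ I).card ∧ J.min = (S \ I).min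
  then X (Sum.inr ⟨(I, J), h⟩) else 0

/-- The variable `ℝD_{I;J,K}` of `R_{0,S}` (equal to `0` if `(I,{J,K}) ∉ P̃•(S)`). -/
def reD (R : Type) [CommRing R] (S I J K : Finset ℕ) : RRing R S :=
  if Disjoint I (J ∪ K) ∧ Disjoint J K ∧ I ∪ (J ∪ K) = S then
    (if J.min ≤ K.min then reXd R S I J else reXd R S I K)
  else 0

/-- The sign `ε_{J,K}`: `1` if `min (J ∪ K) ∈ J` and `-1` otherwise. -/
def epsm (J K : Finset ℕ) : ℤ := if J.min ≤ K.min then 1 else -1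

/-- `{J,K} ⪯ {J',K'}`. -/
abbrev preceq (J K J' K' : Finset ℕ) : Prop := (J ⊆ J' ∧ K ⊆ K') ∨ (J ⊆ K' ∧ K ⊆ J')

/-- `{J,K} ∈ P(S)`. -/
abbrev validE (S J K : Finset ℕ) : Prop := Disjoint J K ∧ J ∪ K = S

/-- `(I,{J,K}) ∈ P̃•(S)`. -/
abbrev validD (S I J K : Finset ℕ) : Prop :=
  Disjoint I (J ∪ K) ∧ Disjoint J K ∧ I ∪ (J ∪ K) = S ∧ 1 ≤ I.card ∧ 2 ≤ (J ∪ K).card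

/-- The element `E^S_{abc}`. -/
def relE (R : Type) [CommRing R] (S : Finset ℕ) (a b c : ℕ) : RRing R S :=
  (∑ I ∈ S.powerset, ∑ J ∈ (S \ I).powerset,
    if 1 ≤ I.card ∧ 2 ≤ (S \ I).card ∧ a ∈ J ∧ b ∈ J ∧ c ∈ I
    then epsm J ((S \ I) \ J) • reD R S I J ((S \ I) \ J) else 0)
  - (∑ I ∈ S.powerset, ∑ J ∈ (S \ I).powerset,
    if 1 ≤ I.card ∧ 2 ≤ (S \ I).card ∧ a ∈ J ∧ c ∈ J ∧ b ∈ I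
    then epsm J ((S \ I) \ J) • reD R S I J ((S \ I) \ J) else 0)
  - ∑ I ∈ S.powerset, ∑ J ∈ (S \ I).powerset,
    if 1 ≤ I.card ∧ 2 ≤ (S \ I).card ∧ a ∈ I ∧ b ∈ J ∧ c ∈ (S \ I) \ J
    then epsm J ((S \ I) \ J) • reD R S I J ((S \ I) \ J) else 0

/-- The element `Σ_{{J,K} ∈ P(S)} ℝE_{J,K}`. -/
def relEsum (R : Type) [CommRing R] (S : Finset ℕ) : RRing R S :=
  ∑ J ∈ S.powerset.filter (fun J => J.min = S.min), reE R S J (S \ J)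

/-- The ideal `I_{0,S} ⊂ R_{0,S}`. -/
def reIdeal (R : Type) [CommRing R] (S : Finset ℕ) : Ideal (RRing R S) :=
  Ideal.span (
    {x | ∃ J K J' K' : Finset ℕ, validE S J K ∧ validE S J' K' ∧
      x = reE R S J K * reE R S J' K'} ∪
    {x | ∃ J K I' J' K' : Finset ℕ, validE S J K ∧ validD S I' J' K' ∧
      ¬ preceq J' K' J K ∧ x = reE R S J K * reD R S I' J' K'} ∪
    {x | ∃ I J K I' J' K' : Finset ℕ, validD S I J K ∧ validD S I' J' K' ∧
      ¬ preceq J K J' K' ∧ ¬ preceq J' K' J K ∧ ¬ J ∪ K ⊆ I' ∧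
      x = reD R S I J K * reD R S I' J' K'} ∪
    {relEsum R S} ∪
    {x | ∃ a b c : ℕ, a ∈ S ∧ b ∈ S ∧ c ∈ S ∧ a ≠ b ∧ a ≠ c ∧ b ≠ c ∧
      x = relE R S a b c})

/-- The element `G_{abc}` of Remark `RcM04rel_e2b2`. -/
def relG (R : Type) [CommRing R] (S : Finset ℕ) (a b c : ℕ) : RRing R S :=
  (∑ I ∈ S.powerset, ∑ J ∈ (S \ I).powerset,
    if 1 ≤ I.card ∧ 2 ≤ (S \ I).card ∧ a ∈ J ∧ b ∉ I ∧ c ∈ I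
    then epsm J ((S \ I) \ J) • reD R S I J ((S \ I) \ J) else 0)
  - ∑ I ∈ S.powerset, ∑ J ∈ (S \ I).powerset,
    if 1 ≤ I.card ∧ 2 ≤ (S \ I).card ∧ a ∈ J ∧ b ∈ I ∧ c ∉ I
    then epsm J ((S \ I) \ J) • reD R S I J ((S \ I) \ J) else 0

/-- The homomorphism `F : R_{0,[ℓ]} → R_{0,[ℓ+1]}`. -/
def Fre (R : Type) [CommRing R] (ℓ : ℕ) : RRing R (Iset ℓ) →ₐ[R] RRing R (Iset (ℓ + 1)) :=
  aeval fun ix =>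
    match ix with
    | Sum.inl e =>
        reE R (Iset (ℓ + 1)) (e.1 ∪ {ℓ + 1}) (Iset ℓ \ e.1)
        + reE R (Iset (ℓ + 1)) e.1 ((Iset ℓ \ e.1) ∪ {ℓ + 1})
    | Sum.inr d =>
        reD R (Iset (ℓ + 1)) (d.1.1 ∪ {ℓ + 1}) d.1.2 ((Iset ℓ \ d.1.1) \ d.1.2)
        + reD R (Iset (ℓ + 1)) d.1.1 (d.1.2 ∪ {ℓ + 1}) ((Iset ℓ \ d.1.1) \ d.1.2)
        + reD R (Iset (ℓ + 1)) d.1.1 d.1.2 (((Iset ℓ \ d.1.1) \ d.1.2) ∪ {ℓ + 1})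

/-- `ℝẼ⁰_{J,K} = ℝD_{{ℓ+1};J,K} ∈ R_{0,[ℓ+1]}`. -/
def reEt0 (R : Type) [CommRing R] (ℓ : ℕ) (J K : Finset ℕ) : RRing R (Iset (ℓ + 1)) :=
  reD R (Iset (ℓ + 1)) {ℓ + 1} J K

/-- `ℝẼ⁻_{J,K} = ℝE_{J,K∪{ℓ+1}} ∈ R_{0,[ℓ+1]}`. -/
def reEtm (R : Type) [CommRing R] (ℓ : ℕ) (J K : Finset ℕ) : RRing R (Iset (ℓ + 1)) :=
  reE R (Iset (ℓ + 1)) J (K ∪ {ℓ + 1})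

/-- `ℝD̃⁰_{I;J,K} ∈ R_{0,[ℓ+1]}` (for `(I,{J,K})` written with `min (J∪K) ∈ J`). -/
def reDt0 (R : Type) [CommRing R] (ℓ : ℕ) (I J K : Finset ℕ) : RRing R (Iset (ℓ + 1)) :=
  if 1 ∈ I then reD R (Iset (ℓ + 1)) I (J ∪ {ℓ + 1}) K
  else reD R (Iset (ℓ + 1)) (I ∪ {ℓ + 1}) J K

/-- `ℝD̃⁻_{I;J,K} = ℝD_{I;J,K∪{ℓ+1}} ∈ R_{0,[ℓ+1]}`. -/
def reDtm (R : Type) [CommRing R] (ℓ : ℕ) (I J K : Finset ℕ) : RRing R (Iset (ℓ + 1)) :=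
  reD R (Iset (ℓ + 1)) I J (K ∪ {ℓ + 1})

/-- The homomorphism `F_{J,K} : R^{cx}_{{nd}⊔[ℓ]} → R_{0,[ℓ]}`,
`D_{J',K'} ↦ (-1)^{|K|} ε_{J∩K',K∩K'} ℝD_{J'-{nd};J∩K',K∩K'}` for `nd ∈ J'`; here `nd = 0`. -/
def FJKre (R : Type) [CommRing R] (ℓ : ℕ) (J K : Finset ℕ) :
    CxRing R (insert 0 (Iset ℓ)) →ₐ[R] RRing R (Iset ℓ) :=
  aeval fun i =>
    ((-1 : ℤ) ^ K.card *
        epsm (J ∩ (insert 0 (Iset ℓ) \ i.1)) (K ∩ (insert 0 (Iset ℓ) \ i.1))) •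
      reD R (Iset ℓ) (i.1.erase 0)
        (J ∩ (insert 0 (Iset ℓ) \ i.1)) (K ∩ (insert 0 (Iset ℓ) \ i.1))

/-- The homomorphism `F²_{I;J,K} : R^{cx}_{{nd}⊔(J∪K)} → R_{0,[ℓ]}`,
`D_{J',K'} ↦ (-1)^{|K|} ε_{J∩K',K∩K'} ℝD_{I∪(J'-{nd});J∩K',K∩K'}` for `nd ∈ J'`;
here `nd = 0`. -/
def F2IJK (R : Type) [CommRing R] (ℓ : ℕ) (I J K : Finset ℕ) :
    CxRing R (insert 0 (J ∪ K)) →ₐ[R] RRing R (Iset ℓ) :=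
  aeval fun i =>
    ((-1 : ℤ) ^ K.card *
        epsm (J ∩ (insert 0 (J ∪ K) \ i.1)) (K ∩ (insert 0 (J ∪ K) \ i.1))) •
      reD R (Iset ℓ) (I ∪ i.1.erase 0)
        (J ∩ (insert 0 (J ∪ K) \ i.1)) (K ∩ (insert 0 (J ∪ K) \ i.1))

/-- `nd` for `{nd} ⊔ I`, identified with `min (ℤ⁺ - I)`. -/
def ndOf (I : Finset ℕ) : ℕ := sInf {n : ℕ | 0 < n ∧ n ∉ I}

/-- The homomorphism `F¹_{I;J,K} : R_{0,{nd}⊔I} → R_{0,[ℓ]}` with `nd = min (ℤ⁺ - I)`. -/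
def F1IJK (R : Type) [CommRing R] (ℓ : ℕ) (I J K : Finset ℕ) :
    RRing R (insert (ndOf I) I) →ₐ[R] RRing R (Iset ℓ) :=
  aeval fun ix =>
    match ix with
    | Sum.inl e =>
        if ndOf I ∈ e.1 then
          reE R (Iset ℓ) (J ∪ e.1.erase (ndOf I)) (K ∪ (insert (ndOf I) I \ e.1))
        else
          reE R (Iset ℓ) (J ∪ (insert (ndOf I) I \ e.1).erase (ndOf I)) (K ∪ e.1)
    | Sum.inr d =>
        if ndOf I ∈ d.1.1 then
          reD R (Iset ℓ) (d.1.1.erase (ndOf I) ∪ J ∪ K) d.1.2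
            ((insert (ndOf I) I \ d.1.1) \ d.1.2)
        else if ndOf I ∈ d.1.2 then
          reD R (Iset ℓ) d.1.1 (J ∪ d.1.2.erase (ndOf I))
            (K ∪ ((insert (ndOf I) I \ d.1.1) \ d.1.2))
        else
          reD R (Iset ℓ) d.1.1
            (J ∪ ((insert (ndOf I) I \ d.1.1) \ d.1.2).erase (ndOf I)) (K ∪ d.1.2)

/-- The homomorphism `F_{I;J,K} : R_{0,{nd}⊔I} ⊗ R^{cx}_{{nd}⊔(J∪K)} → R_{0,[ℓ]}`
induced by `F¹_{I;J,K}` and `F²_{I;J,K}`. -/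
def FIJK (R : Type) [CommRing R] (ℓ : ℕ) (I J K : Finset ℕ) :
    TensorProduct R (RRing R (insert (ndOf I) I)) (CxRing R (insert 0 (J ∪ K))) →ₐ[R]
      RRing R (Iset ℓ) :=
  Algebra.TensorProduct.productMap (F1IJK R ℓ I J K) (F2IJK R ℓ I J K)

/-! ### Auxiliary lemmas for Statement 8 -/

section Stmt8Aux

variable (R : Type) [CommRing R]

lemma union_singleton' (s : Finset ℕ) (a : ℕ) : s ∪ {a} = insert a s := by
  rw [Finset.union_comm, ← Finset.insert_eq]

lemma Iset_succ (ℓ : ℕ) : Iset (ℓ + 1) = insert (ℓ + 1) (Iset ℓ) := by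
  ext x; simp [Finset.mem_Icc]; omega

lemma notMem_Iset (ℓ : ℕ) : ℓ + 1 ∉ Iset ℓ := by simp [Finset.mem_Icc]

lemma both_empty {J K : Finset ℕ} (hd : Disjoint J K) (h : J.min = K.min) :
    J = ∅ ∧ K = ∅ := by
  rcases eq_or_ne J ∅ with hJ | hJ
  · subst hJ
    refine ⟨rfl, ?_⟩
    rw [← Finset.min_eq_top, ← h, Finset.min_eq_top]
  · obtain ⟨a, ha⟩ := Finset.nonempty_iff_ne_empty.mpr hJ
    obtain ⟨b, hb⟩ := Finset.min_of_mem ha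
    have hbJ : b ∈ J := Finset.mem_of_min hb
    have hbK : b ∈ K := Finset.mem_of_min (by rw [← h]; exact hb)
    exact absurd hbK (Finset.disjoint_left.mp hd hbJ)

lemma reE_comm (S J K : Finset ℕ) : reE R S J K = reE R S K J := by
  unfold reE
  by_cases h : Disjoint J K ∧ J ∪ K = S
  · have h' : Disjoint K J ∧ K ∪ J = S := ⟨h.1.symm, by rw [Finset.union_comm]; exact h.2⟩
    rw [if_pos h, if_pos h']
    rcases lt_trichotomy J.min K.min with h1 | h1 | h1
    · rw [if_pos h1.le, if_neg (not_le.2 h1)]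
    · obtain ⟨hJ, hK⟩ := both_empty h.1 h1
      subst hJ; subst hK; simp
    · rw [if_neg (not_le.2 h1), if_pos h1.le]
  · have h' : ¬(Disjoint K J ∧ K ∪ J = S) := fun h' =>
      h ⟨h'.1.symm, by rw [Finset.union_comm]; exact h'.2⟩
    rw [if_neg h, if_neg h']

lemma reD_comm (S I J K : Finset ℕ) : reD R S I J K = reD R S I K J := by
  unfold reD
  by_cases h : Disjoint I (J ∪ K) ∧ Disjoint J K ∧ I ∪ (J ∪ K) = S
  · have h' : Disjoint I (K ∪ J) ∧ Disjoint K J ∧ I ∪ (K ∪ J) = S := by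
      refine ⟨by rw [Finset.union_comm]; exact h.1, h.2.1.symm, ?_⟩
      rw [Finset.union_comm K J]; exact h.2.2
    rw [if_pos h, if_pos h']
    rcases lt_trichotomy J.min K.min with h1 | h1 | h1
    · rw [if_pos h1.le, if_neg (not_le.2 h1)]
    · obtain ⟨hJ, hK⟩ := both_empty h.2.1 h1
      subst hJ; subst hK; simp
    · rw [if_neg (not_le.2 h1), if_pos h1.le]
  · have h' : ¬(Disjoint I (K ∪ J) ∧ Disjoint K J ∧ I ∪ (K ∪ J) = S) := by
      intro h'
      exact h ⟨by rw [Finset.union_comm]; exact h'.1, h'.2.1.symm,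
        by rw [Finset.union_comm J K]; exact h'.2.2⟩
    rw [if_neg h, if_neg h']

lemma Fre_reE (ℓ : ℕ) {J K : Finset ℕ} (hd : Disjoint J K) (hu : J ∪ K = Iset ℓ) :
    Fre R ℓ (reE R (Iset ℓ) J K) =
      reE R (Iset (ℓ + 1)) (J ∪ {ℓ + 1}) K + reE R (Iset (ℓ + 1)) J (K ∪ {ℓ + 1}) := by
  have hJS : J ⊆ Iset ℓ := hu ▸ Finset.subset_union_left
  have hKS : K ⊆ Iset ℓ := hu ▸ Finset.subset_union_right
  have hsdJ : Iset ℓ \ J = K := by rw [← hu, Finset.union_sdiff_cancel_left hd]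
  have hsdK : Iset ℓ \ K = J := by
    rw [← hu, Finset.union_comm, Finset.union_sdiff_cancel_left hd.symm]
  rcases le_or_gt J.min K.min with h1 | h1
  · have hm : J.min = (Iset ℓ).min := by
      rw [← hu, Finset.min_union, inf_eq_left.mpr h1]
    rw [reE, if_pos ⟨hd, hu⟩, if_pos h1, reXe, dif_pos ⟨hJS, hm⟩, Fre, aeval_X]
    dsimp only
    rw [hsdJ]
  · have hm : K.min = (Iset ℓ).min := by
      rw [← hu, Finset.min_union, inf_eq_right.mpr h1.le]
    rw [reE, if_pos ⟨hd, hu⟩, if_neg (not_le.2 h1), reXe, dif_pos ⟨hKS, hm⟩, Fre, aeval_X]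
    dsimp only
    rw [hsdK, reE_comm R _ (K ∪ {ℓ + 1}) J, reE_comm R _ K (J ∪ {ℓ + 1})]
    exact add_comm _ _

lemma Fre_reD (ℓ : ℕ) {I J K : Finset ℕ} (hdI : Disjoint I (J ∪ K)) (hdJK : Disjoint J K)
    (hu : I ∪ (J ∪ K) = Iset ℓ) (hcI : 1 ≤ I.card) (hcJK : 2 ≤ (J ∪ K).card) :
    Fre R ℓ (reD R (Iset ℓ) I J K) =
      reD R (Iset (ℓ + 1)) (I ∪ {ℓ + 1}) J K
      + reD R (Iset (ℓ + 1)) I (J ∪ {ℓ + 1}) K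
      + reD R (Iset (ℓ + 1)) I J (K ∪ {ℓ + 1}) := by
  have hIS : I ⊆ Iset ℓ := hu ▸ Finset.subset_union_left
  have hsdI : Iset ℓ \ I = J ∪ K := by rw [← hu, Finset.union_sdiff_cancel_left hdI]
  have hsdJ : (J ∪ K) \ J = K := Finset.union_sdiff_cancel_left hdJK
  have hsdK : (J ∪ K) \ K = J := by
    rw [Finset.union_comm, Finset.union_sdiff_cancel_left hdJK.symm]
  rcases le_or_gt J.min K.min with h1 | h1
  · have hm : J.min = (Iset ℓ \ I).min := by
      rw [hsdI, Finset.min_union, inf_eq_left.mpr h1]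
    have hJsub : J ⊆ Iset ℓ \ I := hsdI ▸ Finset.subset_union_left
    have hcd : 2 ≤ (Iset ℓ \ I).card := by rw [hsdI]; exact hcJK
    rw [reD, if_pos ⟨hdI, hdJK, hu⟩, if_pos h1, reXd, dif_pos ⟨hIS, hJsub, hcI, hcd, hm⟩,
      Fre, aeval_X]
    dsimp only
    rw [hsdI, hsdJ]
  · have hm : K.min = (Iset ℓ \ I).min := by
      rw [hsdI, Finset.min_union, inf_eq_right.mpr h1.le]
    have hKsub : K ⊆ Iset ℓ \ I := hsdI ▸ Finset.subset_union_right
    have hcd : 2 ≤ (Iset ℓ \ I).card := by rw [hsdI]; exact hcJK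
    rw [reD, if_pos ⟨hdI, hdJK, hu⟩, if_neg (not_le.2 h1), reXd,
      dif_pos ⟨hIS, hKsub, hcI, hcd, hm⟩, Fre, aeval_X]
    dsimp only
    rw [hsdI, hsdK, reD_comm R _ _ K J, reD_comm R _ _ (K ∪ {ℓ + 1}) J,
      reD_comm R _ _ K (J ∪ {ℓ + 1})]
    ring

lemma Iset_mono (ℓ : ℕ) : Iset ℓ ⊆ Iset (ℓ + 1) := Finset.Icc_subset_Icc le_rfl (by omega)

lemma inter_self' {ℓ : ℕ} {A : Finset ℕ} (h : A ⊆ Iset ℓ) : A ∩ Iset ℓ = A :=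
  Finset.inter_eq_left.mpr h

lemma inter_aug {ℓ : ℕ} {A : Finset ℕ} (h : A ⊆ Iset ℓ) : (A ∪ {ℓ + 1}) ∩ Iset ℓ = A := by
  rw [Finset.union_inter_distrib_right,
    Finset.singleton_inter_of_notMem (notMem_Iset ℓ), Finset.union_empty, inter_self' h]

lemma notMem_of_sub {ℓ : ℕ} {A : Finset ℕ} (h : A ⊆ Iset ℓ) : ℓ + 1 ∉ A :=
  fun hx => notMem_Iset ℓ (h hx)

lemma validE_subs {ℓ : ℕ} {J K : Finset ℕ} (h : validE (Iset ℓ) J K) :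
    J ⊆ Iset ℓ ∧ K ⊆ Iset ℓ :=
  ⟨h.2 ▸ Finset.subset_union_left, h.2 ▸ Finset.subset_union_right⟩

lemma validE_up_left {ℓ : ℕ} {J K : Finset ℕ} (h : validE (Iset ℓ) J K) :
    validE (Iset (ℓ + 1)) (J ∪ {ℓ + 1}) K := by
  obtain ⟨hJ, hK⟩ := validE_subs h
  refine ⟨Finset.disjoint_union_left.mpr ⟨h.1,
    Finset.disjoint_singleton_left.mpr (notMem_of_sub hK)⟩, ?_⟩
  rw [Finset.union_right_comm, h.2, union_singleton', ← Iset_succ]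

lemma validE_up_right {ℓ : ℕ} {J K : Finset ℕ} (h : validE (Iset ℓ) J K) :
    validE (Iset (ℓ + 1)) J (K ∪ {ℓ + 1}) := by
  obtain ⟨hJ, hK⟩ := validE_subs h
  refine ⟨Finset.disjoint_union_right.mpr ⟨h.1,
    Finset.disjoint_singleton_right.mpr (notMem_of_sub hJ)⟩, ?_⟩
  rw [← Finset.union_assoc, h.2, union_singleton', ← Iset_succ]

lemma validD_subs {ℓ : ℕ} {I J K : Finset ℕ} (h : validD (Iset ℓ) I J K) :
    I ⊆ Iset ℓ ∧ J ⊆ Iset ℓ ∧ K ⊆ Iset ℓ := by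
  refine ⟨h.2.2.1 ▸ Finset.subset_union_left, ?_, ?_⟩
  · exact h.2.2.1 ▸ (Finset.subset_union_left.trans Finset.subset_union_right)
  · exact h.2.2.1 ▸ (Finset.subset_union_right.trans Finset.subset_union_right)

lemma validD_up_I {ℓ : ℕ} {I J K : Finset ℕ} (h : validD (Iset ℓ) I J K) :
    validD (Iset (ℓ + 1)) (I ∪ {ℓ + 1}) J K := by
  obtain ⟨hI, hJ, hK⟩ := validD_subs h
  refine ⟨Finset.disjoint_union_left.mpr ⟨h.1, Finset.disjoint_singleton_left.mpr ?_⟩,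
    h.2.1, ?_, ?_, h.2.2.2.2⟩
  · exact fun hx => (Finset.mem_union.mp hx).elim (notMem_of_sub hJ) (notMem_of_sub hK)
  · rw [Finset.union_right_comm, h.2.2.1, union_singleton', ← Iset_succ]
  · exact le_trans h.2.2.2.1 (Finset.card_le_card Finset.subset_union_left)

lemma validD_up_J {ℓ : ℕ} {I J K : Finset ℕ} (h : validD (Iset ℓ) I J K) :
    validD (Iset (ℓ + 1)) I (J ∪ {ℓ + 1}) K := by
  obtain ⟨hI, hJ, hK⟩ := validD_subs h
  refine ⟨?_, Finset.disjoint_union_left.mpr ⟨h.2.1,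
      Finset.disjoint_singleton_left.mpr (notMem_of_sub hK)⟩, ?_, h.2.2.2.1, ?_⟩
  · rw [Finset.union_right_comm J {ℓ + 1} K]
    exact Finset.disjoint_union_right.mpr ⟨h.1,
      Finset.disjoint_singleton_right.mpr (notMem_of_sub hI)⟩
  · rw [Finset.union_right_comm J {ℓ + 1} K, ← Finset.union_assoc, h.2.2.1,
      union_singleton', ← Iset_succ]
  · refine le_trans h.2.2.2.2 (Finset.card_le_card ?_)
    exact Finset.union_subset_union Finset.subset_union_left (Finset.Subset.refl K)

lemma validD_up_K {ℓ : ℕ} {I J K : Finset ℕ} (h : validD (Iset ℓ) I J K) :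
    validD (Iset (ℓ + 1)) I J (K ∪ {ℓ + 1}) := by
  obtain ⟨hI, hJ, hK⟩ := validD_subs h
  refine ⟨?_, Finset.disjoint_union_right.mpr ⟨h.2.1,
      Finset.disjoint_singleton_right.mpr (notMem_of_sub hJ)⟩, ?_, h.2.2.2.1, ?_⟩
  · rw [← Finset.union_assoc]
    exact Finset.disjoint_union_right.mpr ⟨h.1,
      Finset.disjoint_singleton_right.mpr (notMem_of_sub hI)⟩
  · rw [← Finset.union_assoc J K {ℓ + 1}, ← Finset.union_assoc I (J ∪ K) {ℓ + 1}, h.2.2.1,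
      union_singleton', ← Iset_succ]
  · refine le_trans h.2.2.2.2 (Finset.card_le_card ?_)
    rw [← Finset.union_assoc J K {ℓ + 1}]
    exact Finset.subset_union_left

lemma not_preceq_aug {T A B C D A' B' C' D' : Finset ℕ} (h : ¬ preceq A B C D)
    (hA : A' ∩ T = A) (hB : B' ∩ T = B) (hC : C' ∩ T = C) (hD : D' ∩ T = D) :
    ¬ preceq A' B' C' D' := by
  intro hp
  apply h
  rcases hp with ⟨h1, h2⟩ | ⟨h1, h2⟩
  · left
    constructor
    · rw [← hA, ← hC]; exact Finset.inter_subset_inter h1 (Finset.Subset.refl T)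
    · rw [← hB, ← hD]; exact Finset.inter_subset_inter h2 (Finset.Subset.refl T)
  · right
    constructor
    · rw [← hA, ← hD]; exact Finset.inter_subset_inter h1 (Finset.Subset.refl T)
    · rw [← hB, ← hC]; exact Finset.inter_subset_inter h2 (Finset.Subset.refl T)

lemma not_union_subset_aug {T J K I' J1 K1 I1 : Finset ℕ} (h : ¬ J ∪ K ⊆ I')
    (hJ : J1 ∩ T = J) (hK : K1 ∩ T = K) (hI : I1 ∩ T = I') : ¬ J1 ∪ K1 ⊆ I1 := by
  intro hp
  apply h
  rw [← hJ, ← hK, ← hI, ← Finset.union_inter_distrib_right]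
  exact Finset.inter_subset_inter hp (Finset.Subset.refl T)

lemma mem_EE {S J K J' K' : Finset ℕ} (h1 : validE S J K) (h2 : validE S J' K') :
    reE R S J K * reE R S J' K' ∈ reIdeal R S :=
  Ideal.subset_span (Or.inl (Or.inl (Or.inl (Or.inl ⟨J, K, J', K', h1, h2, rfl⟩))))

lemma mem_ED {S J K I' J' K' : Finset ℕ} (h1 : validE S J K) (h2 : validD S I' J' K')
    (h3 : ¬ preceq J' K' J K) :
    reE R S J K * reD R S I' J' K' ∈ reIdeal R S :=
  Ideal.subset_span (Or.inl (Or.inl (Or.inl (Or.inr ⟨J, K, I', J', K', h1, h2, h3, rfl⟩))))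

lemma mem_DD {S I J K I' J' K' : Finset ℕ} (h1 : validD S I J K) (h2 : validD S I' J' K')
    (h3 : ¬ preceq J K J' K') (h4 : ¬ preceq J' K' J K) (h5 : ¬ J ∪ K ⊆ I') :
    reD R S I J K * reD R S I' J' K' ∈ reIdeal R S :=
  Ideal.subset_span (Or.inl (Or.inl (Or.inr ⟨I, J, K, I', J', K', h1, h2, h3, h4, h5, rfl⟩)))

lemma mem_esum (S : Finset ℕ) : relEsum R S ∈ reIdeal R S :=
  Ideal.subset_span (Or.inl (Or.inr rfl))

lemma mem_relE {S : Finset ℕ} {a b c : ℕ} (ha : a ∈ S) (hb : b ∈ S) (hc : c ∈ S)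
    (hab : a ≠ b) (hac : a ≠ c) (hbc : b ≠ c) : relE R S a b c ∈ reIdeal R S :=
  Ideal.subset_span (Or.inr ⟨a, b, c, ha, hb, hc, hab, hac, hbc, rfl⟩)

lemma insert_sdiff_insert' {a : ℕ} {T J : Finset ℕ} (ha : a ∉ T) :
    insert a T \ insert a J = T \ J := by
  ext x
  simp only [Finset.mem_sdiff, Finset.mem_insert, not_or]
  constructor
  · rintro ⟨rfl | hxT, h2⟩
    · exact absurd rfl h2.1
    · exact ⟨hxT, h2.2⟩
  · rintro ⟨hxT, hxJ⟩
    exact ⟨Or.inr hxT, fun h => ha (h ▸ hxT), hxJ⟩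

lemma sdiff_insert_top {ℓ : ℕ} {I : Finset ℕ} (hI : I ⊆ Iset ℓ) :
    Iset (ℓ + 1) \ insert (ℓ + 1) I = Iset ℓ \ I := by
  rw [Iset_succ]
  exact insert_sdiff_insert' (notMem_Iset ℓ)

lemma sdiff_sub_top {ℓ : ℕ} {I : Finset ℕ} (hI : I ⊆ Iset ℓ) :
    Iset (ℓ + 1) \ I = insert (ℓ + 1) (Iset ℓ \ I) := by
  rw [Iset_succ]
  exact Finset.insert_sdiff_of_notMem _ (notMem_of_sub hI)

lemma powerset_filter_mem_sum {β : Type*} [AddCommMonoid β] {a : ℕ} {T : Finset ℕ}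
    (ha : a ∉ T) (g : Finset ℕ → β) :
    ∑ s ∈ (insert a T).powerset.filter (fun s => a ∈ s), g s
      = ∑ s ∈ T.powerset, g (insert a s) := by
  refine Finset.sum_nbij' (fun s => s.erase a) (fun s => insert a s) ?_ ?_ ?_ ?_ ?_
  · intro s hs
    simp only [Finset.mem_filter, Finset.mem_powerset] at hs
    rw [Finset.mem_powerset]
    intro x hx
    obtain ⟨hxa, hxs⟩ := Finset.mem_erase.mp hx
    rcases Finset.mem_insert.mp (hs.1 hxs) with rfl | h
    · exact absurd rfl hxa
    · exact h
  · intro s hs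
    rw [Finset.mem_powerset] at hs
    simp only [Finset.mem_filter, Finset.mem_powerset]
    exact ⟨Finset.insert_subset_insert a hs, Finset.mem_insert_self a s⟩
  · intro s hs
    simp only [Finset.mem_filter] at hs
    exact Finset.insert_erase hs.2
  · intro s hs
    rw [Finset.mem_powerset] at hs
    exact Finset.erase_insert (fun h => ha (hs h))
  · intro s hs
    simp only [Finset.mem_filter] at hs
    rw [Finset.insert_erase hs.2]

lemma powerset_filter_notMem {a : ℕ} {T : Finset ℕ} (ha : a ∉ T) :
    (insert a T).powerset.filter (fun s => ¬ a ∈ s) = T.powerset := by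
  ext s
  simp only [Finset.mem_filter, Finset.mem_powerset]
  constructor
  · rintro ⟨h1, h2⟩ x hx
    rcases Finset.mem_insert.mp (h1 hx) with rfl | h
    · exact absurd hx h2
    · exact h
  · intro h
    exact ⟨h.trans (Finset.subset_insert a T), fun hmem => ha (h hmem)⟩

lemma double_sum_split {β : Type*} [AddCommMonoid β] {a : ℕ} {T S' : Finset ℕ} (ha : a ∉ T)
    (hS' : S' = insert a T) (g : Finset ℕ → Finset ℕ → β) :
    ∑ I ∈ S'.powerset, ∑ J ∈ (S' \ I).powerset, g I J
      = ∑ I ∈ T.powerset, ∑ J ∈ (T \ I).powerset,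
          (g (insert a I) J + g I (insert a J) + g I J) := by
  subst hS'
  rw [← Finset.sum_filter_add_sum_filter_not (insert a T).powerset (fun I => a ∈ I)]
  have e1 : ∑ I ∈ (insert a T).powerset.filter (fun I => a ∈ I),
      ∑ J ∈ ((insert a T) \ I).powerset, g I J
      = ∑ I ∈ T.powerset, ∑ J ∈ (T \ I).powerset, g (insert a I) J := by
    rw [powerset_filter_mem_sum ha]
    refine Finset.sum_congr rfl fun I hI => ?_
    rw [insert_sdiff_insert' ha]
  have e2 : ∑ I ∈ (insert a T).powerset.filter (fun I => ¬ a ∈ I),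
      ∑ J ∈ ((insert a T) \ I).powerset, g I J
      = ∑ I ∈ T.powerset, (∑ J ∈ (T \ I).powerset, g I (insert a J)
          + ∑ J ∈ (T \ I).powerset, g I J) := by
    rw [powerset_filter_notMem ha]
    refine Finset.sum_congr rfl fun I hI => ?_
    rw [Finset.mem_powerset] at hI
    have haI : a ∉ I := fun h => ha (hI h)
    have haTI : a ∉ T \ I := fun h => ha (Finset.mem_sdiff.mp h).1
    rw [Finset.insert_sdiff_of_notMem _ haI,
      ← Finset.sum_filter_add_sum_filter_not (insert a (T \ I)).powerset (fun J => a ∈ J)]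
    congr 1
    · rw [powerset_filter_mem_sum haTI]
    · rw [powerset_filter_notMem haTI]
  rw [e1, e2]
  simp only [Finset.sum_add_distrib]
  abel

lemma min_Iset (m : ℕ) (hm : 1 ≤ m) : (Iset m).min = (1 : ℕ) := by
  apply le_antisymm
  · exact Finset.min_le (by simp [Finset.mem_Icc]; omega)
  · refine Finset.le_min fun b hb => ?_
    rw [Finset.mem_Icc] at hb
    exact WithTop.coe_le_coe.mpr hb.1

lemma mem_one_iff {m : ℕ} (hm : 1 ≤ m) {J : Finset ℕ} (hJ : J ⊆ Iset m) :
    J.min = (Iset m).min ↔ 1 ∈ J := by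
  rw [min_Iset m hm]
  constructor
  · exact fun h => Finset.mem_of_min h
  · intro h
    apply le_antisymm (Finset.min_le h)
    refine Finset.le_min fun b hb => ?_
    have := (Finset.mem_Icc.mp (hJ hb)).1
    exact WithTop.coe_le_coe.mpr this

lemma relEsum_filter (m : ℕ) (hm : 1 ≤ m) :
    relEsum R (Iset m)
      = ∑ J ∈ (Iset m).powerset.filter (fun J => 1 ∈ J), reE R (Iset m) J (Iset m \ J) := by
  unfold relEsum
  congr 1
  refine Finset.filter_congr fun J hJ => ?_
  rw [Finset.mem_powerset] at hJ
  exact mem_one_iff hm hJ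

lemma Fre_relEsum (ℓ : ℕ) (hℓ : 1 ≤ ℓ) :
    Fre R ℓ (relEsum R (Iset ℓ)) = relEsum R (Iset (ℓ + 1)) := by
  rw [relEsum_filter R ℓ hℓ, relEsum_filter R (ℓ + 1) (by omega), map_sum]
  have step1 : ∀ J ∈ (Iset ℓ).powerset.filter (fun J => 1 ∈ J),
      Fre R ℓ (reE R (Iset ℓ) J (Iset ℓ \ J)) =
      reE R (Iset (ℓ + 1)) (J ∪ {ℓ + 1}) (Iset ℓ \ J)
        + reE R (Iset (ℓ + 1)) J ((Iset ℓ \ J) ∪ {ℓ + 1}) := by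
    intro J hJ
    simp only [Finset.mem_filter, Finset.mem_powerset] at hJ
    exact Fre_reE R ℓ Finset.disjoint_sdiff (Finset.union_sdiff_of_subset hJ.1)
  rw [Finset.sum_congr rfl step1, Finset.sum_add_distrib,
    ← Finset.sum_filter_add_sum_filter_not ((Iset (ℓ + 1)).powerset.filter (fun J => 1 ∈ J))
      (fun J => ℓ + 1 ∈ J)]
  congr 1
  · -- part with ℓ+1 ∈ J'
    refine Finset.sum_nbij' (fun J => insert (ℓ + 1) J) (fun J => J.erase (ℓ + 1))
      ?_ ?_ ?_ ?_ ?_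
    · intro J hJ
      simp only [Finset.mem_filter, Finset.mem_powerset] at hJ ⊢
      refine ⟨⟨?_, Finset.mem_insert_of_mem hJ.2⟩, Finset.mem_insert_self _ _⟩
      rw [Iset_succ]
      exact Finset.insert_subset_insert _ hJ.1
    · intro J hJ
      simp only [Finset.mem_filter, Finset.mem_powerset] at hJ ⊢
      obtain ⟨⟨hsub, h1⟩, htop⟩ := hJ
      constructor
      · intro x hx
        obtain ⟨hxne, hxJ⟩ := Finset.mem_erase.mp hx
        have := Finset.mem_Icc.mp (hsub hxJ)
        rw [Finset.mem_Icc]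
        omega
      · exact Finset.mem_erase.mpr ⟨by omega, h1⟩
    · intro J hJ
      simp only [Finset.mem_filter, Finset.mem_powerset] at hJ
      exact Finset.erase_insert (notMem_of_sub hJ.1)
    · intro J hJ
      simp only [Finset.mem_filter] at hJ
      exact Finset.insert_erase hJ.2
    · intro J hJ
      simp only [Finset.mem_filter, Finset.mem_powerset] at hJ
      rw [union_singleton', sdiff_insert_top hJ.1]
  · -- part with ℓ+1 ∉ J'
    have hidx : ((Iset (ℓ + 1)).powerset.filter (fun J => 1 ∈ J)).filter (fun J => ¬ ℓ + 1 ∈ J)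
        = (Iset ℓ).powerset.filter (fun J => 1 ∈ J) := by
      ext J
      simp only [Finset.mem_filter, Finset.mem_powerset]
      constructor
      · rintro ⟨⟨hsub, h1⟩, htop⟩
        refine ⟨fun x hx => ?_, h1⟩
        have := Finset.mem_Icc.mp (hsub hx)
        rw [Finset.mem_Icc]
        have hxne : x ≠ ℓ + 1 := fun h => htop (h ▸ hx)
        omega
      · rintro ⟨hsub, h1⟩
        exact ⟨⟨hsub.trans (Iset_mono ℓ), h1⟩, fun h => notMem_Iset ℓ (hsub h)⟩
    rw [hidx]
    refine Finset.sum_congr rfl fun J hJ => ?_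
    simp only [Finset.mem_filter, Finset.mem_powerset] at hJ
    rw [sdiff_sub_top hJ.1, ← union_singleton']

lemma min_insert_eq {ℓ : ℕ} {J : Finset ℕ} (hne : J.Nonempty) (hbd : J ⊆ Iset ℓ) :
    (insert (ℓ + 1) J).min = J.min := by
  apply le_antisymm (Finset.min_mono (Finset.subset_insert _ _))
  refine Finset.le_min fun y hy => ?_
  rcases Finset.mem_insert.mp hy with rfl | hyJ
  · obtain ⟨x, hx⟩ := hne
    refine le_trans (Finset.min_le hx) ?_
    have hxl := (Finset.mem_Icc.mp (hbd hx)).2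
    exact_mod_cast (show x ≤ ℓ + 1 by omega)
  · exact Finset.min_le hyJ

lemma epsm_insert_left {ℓ : ℕ} {J K : Finset ℕ} (hne : J.Nonempty) (hbd : J ⊆ Iset ℓ) :
    epsm (insert (ℓ + 1) J) K = epsm J K := by
  unfold epsm
  rw [min_insert_eq hne hbd]

lemma epsm_insert_right {ℓ : ℕ} {J K : Finset ℕ} (hne : J.Nonempty) (hbd : J ⊆ Iset ℓ) :
    epsm J (insert (ℓ + 1) K) = epsm J K := by
  unfold epsm
  have h : (J.min ≤ (insert (ℓ + 1) K).min) ↔ (J.min ≤ K.min) := by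
    rw [Finset.min_insert, le_inf_iff]
    refine and_iff_right ?_
    obtain ⟨x, hx⟩ := hne
    refine le_trans (Finset.min_le hx) ?_
    have hxl := (Finset.mem_Icc.mp (hbd hx)).2
    exact_mod_cast (show x ≤ ℓ + 1 by omega)
  simp only [h]

lemma master (ℓ : ℕ) (M : Finset ℕ → Finset ℕ → Finset ℕ → Prop)
    [inst : ∀ I J K, Decidable (M I J K)]
    (hM1 : ∀ I J K, M (insert (ℓ + 1) I) J K ↔ M I J K)
    (hM2 : ∀ I J K, M I (insert (ℓ + 1) J) K ↔ M I J K)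
    (hM3 : ∀ I J K, M I J (insert (ℓ + 1) K) ↔ M I J K)
    (hInem : ∀ I J K, M I J K → I.Nonempty)
    (hJnem : ∀ I J K, M I J K → J.Nonempty)
    (hcard : ∀ I J K, M I J K → 2 ≤ (J ∪ K).card) :
    Fre R ℓ (∑ I ∈ (Iset ℓ).powerset, ∑ J ∈ (Iset ℓ \ I).powerset,
      if 1 ≤ I.card ∧ 2 ≤ (Iset ℓ \ I).card ∧ M I J ((Iset ℓ \ I) \ J)
      then epsm J ((Iset ℓ \ I) \ J) • reD R (Iset ℓ) I J ((Iset ℓ \ I) \ J) else 0)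
    = ∑ I ∈ (Iset (ℓ + 1)).powerset, ∑ J ∈ (Iset (ℓ + 1) \ I).powerset,
      if 1 ≤ I.card ∧ 2 ≤ (Iset (ℓ + 1) \ I).card ∧ M I J ((Iset (ℓ + 1) \ I) \ J)
      then epsm J ((Iset (ℓ + 1) \ I) \ J) • reD R (Iset (ℓ + 1)) I J ((Iset (ℓ + 1) \ I) \ J)
      else 0 := by
  rw [double_sum_split (notMem_Iset ℓ) (Iset_succ ℓ)
    (fun I J => if 1 ≤ I.card ∧ 2 ≤ (Iset (ℓ + 1) \ I).card ∧ M I J ((Iset (ℓ + 1) \ I) \ J)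
      then epsm J ((Iset (ℓ + 1) \ I) \ J) • reD R (Iset (ℓ + 1)) I J ((Iset (ℓ + 1) \ I) \ J)
      else 0), map_sum]
  refine Finset.sum_congr rfl fun I hI => ?_
  rw [Finset.mem_powerset] at hI
  rw [map_sum]
  refine Finset.sum_congr rfl fun J hJ => ?_
  rw [Finset.mem_powerset] at hJ
  beta_reduce
  have hJIset : J ⊆ Iset ℓ := hJ.trans Finset.sdiff_subset
  have hx : ℓ + 1 ∉ Iset ℓ \ I := fun h => notMem_Iset ℓ (Finset.sdiff_subset h)
  have haJ : ℓ + 1 ∉ J := notMem_of_sub hJIset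
  rw [sdiff_insert_top hI, sdiff_sub_top hI, insert_sdiff_insert' hx,
    Finset.insert_sdiff_of_notMem _ haJ, Finset.card_insert_of_notMem hx]
  by_cases hcm : M I J ((Iset ℓ \ I) \ J)
  · have hIne := hInem _ _ _ hcm
    have hJne := hJnem _ _ _ hcm
    have hcI : 1 ≤ I.card := Finset.card_pos.mpr hIne
    have hJK : J ∪ ((Iset ℓ \ I) \ J) = Iset ℓ \ I := Finset.union_sdiff_of_subset hJ
    have hc2 : 2 ≤ (Iset ℓ \ I).card := by
      have := hcard _ _ _ hcm
      rwa [hJK] at this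
    have hdJK : Disjoint J ((Iset ℓ \ I) \ J) := Finset.disjoint_sdiff
    have hdI : Disjoint I (J ∪ ((Iset ℓ \ I) \ J)) := by
      rw [hJK]; exact Finset.disjoint_sdiff
    have hu : I ∪ (J ∪ ((Iset ℓ \ I) \ J)) = Iset ℓ := by
      rw [hJK]; exact Finset.union_sdiff_of_subset hI
    rw [if_pos ⟨hcI, hc2, hcm⟩, map_zsmul,
      Fre_reD R ℓ hdI hdJK hu hcI (by rw [hJK]; exact hc2),
      if_pos ⟨Finset.card_pos.mpr (Finset.insert_nonempty _ _), hc2, (hM1 _ _ _).mpr hcm⟩,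
      if_pos ⟨hcI, by omega, (hM2 _ _ _).mpr hcm⟩,
      if_pos ⟨hcI, by omega, (hM3 _ _ _).mpr hcm⟩,
      epsm_insert_left hJne hJIset, epsm_insert_right hJne hJIset,
      union_singleton' I (ℓ + 1), union_singleton' J (ℓ + 1),
      union_singleton' ((Iset ℓ \ I) \ J) (ℓ + 1), smul_add, smul_add]
  · rw [if_neg (fun h => hcm h.2.2), map_zero,
      if_neg (fun h => hcm ((hM1 _ _ _).mp h.2.2)),
      if_neg (fun h => hcm ((hM2 _ _ _).mp h.2.2)),
      if_neg (fun h => hcm ((hM3 _ _ _).mp h.2.2))]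
    simp only [add_zero]

lemma Fre_relE (ℓ : ℕ) {a b c : ℕ} (ha : a ∈ Iset ℓ) (hb : b ∈ Iset ℓ) (hc : c ∈ Iset ℓ)
    (hab : a ≠ b) (hac : a ≠ c) (hbc : b ≠ c) :
    Fre R ℓ (relE R (Iset ℓ) a b c) = relE R (Iset (ℓ + 1)) a b c := by
  have hane : a ≠ ℓ + 1 := by have := (Finset.mem_Icc.mp ha).2; omega
  have hbne : b ≠ ℓ + 1 := by have := (Finset.mem_Icc.mp hb).2; omega
  have hcne : c ≠ ℓ + 1 := by have := (Finset.mem_Icc.mp hc).2; omega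
  unfold relE
  rw [map_sub, map_sub]
  refine congrArg₂ (· - ·) (congrArg₂ (· - ·) ?_ ?_) ?_
  · exact master R ℓ (fun I J _ => a ∈ J ∧ b ∈ J ∧ c ∈ I)
      (fun I J K => by simp [Finset.mem_insert, hcne])
      (fun I J K => by simp [Finset.mem_insert, hane, hbne])
      (fun I J K => Iff.rfl)
      (fun I J K h => ⟨c, h.2.2⟩)
      (fun I J K h => ⟨a, h.1⟩)
      (fun I J K h => Finset.one_lt_card.mpr
        ⟨a, Finset.mem_union_left _ h.1, b, Finset.mem_union_left _ h.2.1, hab⟩)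
  · exact master R ℓ (fun I J _ => a ∈ J ∧ c ∈ J ∧ b ∈ I)
      (fun I J K => by simp [Finset.mem_insert, hbne])
      (fun I J K => by simp [Finset.mem_insert, hane, hcne])
      (fun I J K => Iff.rfl)
      (fun I J K h => ⟨b, h.2.2⟩)
      (fun I J K h => ⟨a, h.1⟩)
      (fun I J K h => Finset.one_lt_card.mpr
        ⟨a, Finset.mem_union_left _ h.1, c, Finset.mem_union_left _ h.2.1, hac⟩)
  · exact master R ℓ (fun I J K => a ∈ I ∧ b ∈ J ∧ c ∈ K)
      (fun I J K => by simp [Finset.mem_insert, hane])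
      (fun I J K => by simp [Finset.mem_insert, hbne])
      (fun I J K => by simp [Finset.mem_insert, hcne])
      (fun I J K h => ⟨a, h.1⟩)
      (fun I J K h => ⟨b, h.2.1⟩)
      (fun I J K h => Finset.one_lt_card.mpr
        ⟨b, Finset.mem_union_left _ h.2.1, c, Finset.mem_union_right _ h.2.2, hbc⟩)

end Stmt8Aux

/-- `F(I_{0,[ℓ]}) ⊆ I_{0,[ℓ+1]}` for the homomorphism
`F : R_{0,[ℓ]} → R_{0,[ℓ+1]}`. -/
theorem stmt8 (R : Type) [CommRing R] (ℓ : ℕ) (hℓ : 2 ≤ ℓ) :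
    ∀ x ∈ reIdeal R (Iset ℓ), Fre R ℓ x ∈ reIdeal R (Iset (ℓ + 1)) := by
  intro x hx
  have key : reIdeal R (Iset ℓ) ≤ Ideal.comap (Fre R ℓ).toRingHom (reIdeal R (Iset (ℓ + 1))) := by
    rw [reIdeal, Ideal.span_le]
    intro y hy
    simp only [Set.mem_union, Set.mem_setOf_eq, Set.mem_singleton_iff] at hy
    rw [SetLike.mem_coe, Ideal.mem_comap]
    show Fre R ℓ y ∈ reIdeal R (Iset (ℓ + 1))
    obtain ((((⟨J, K, J', K', h1, h2, rfl⟩ | ⟨J, K, I', J', K', h1, h2, h3, rfl⟩) |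
        ⟨I, J, K, I', J', K', h1, h2, h3, h4, h5, rfl⟩) | rfl) |
        ⟨a, b, c, ha, hb, hc, hab, hac, hbc, rfl⟩) := hy
    · -- E·E
      rw [map_mul, Fre_reE R ℓ h1.1 h1.2, Fre_reE R ℓ h2.1 h2.2]
      simp only [mul_add, add_mul]
      repeat' refine Ideal.add_mem _ ?_ ?_
      · exact mem_EE (R := R) (validE_up_left h1) (validE_up_left h2)
      · exact mem_EE (R := R) (validE_up_right h1) (validE_up_left h2)
      · exact mem_EE (R := R) (validE_up_left h1) (validE_up_right h2)
      · exact mem_EE (R := R) (validE_up_right h1) (validE_up_right h2)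
    · -- E·D
      obtain ⟨hJ, hK⟩ := validE_subs h1
      obtain ⟨hI', hJ', hK'⟩ := validD_subs h2
      rw [map_mul, Fre_reE R ℓ h1.1 h1.2,
        Fre_reD R ℓ h2.1 h2.2.1 h2.2.2.1 h2.2.2.2.1 h2.2.2.2.2]
      simp only [mul_add, add_mul]
      repeat' refine Ideal.add_mem _ ?_ ?_
      · exact mem_ED (R := R) (validE_up_left h1) (validD_up_I h2)
          (not_preceq_aug h3 (inter_self' hJ') (inter_self' hK') (inter_aug hJ)
            (inter_self' hK))
      · exact mem_ED (R := R) (validE_up_right h1) (validD_up_I h2)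
          (not_preceq_aug h3 (inter_self' hJ') (inter_self' hK') (inter_self' hJ)
            (inter_aug hK))
      · exact mem_ED (R := R) (validE_up_left h1) (validD_up_J h2)
          (not_preceq_aug h3 (inter_aug hJ') (inter_self' hK') (inter_aug hJ)
            (inter_self' hK))
      · exact mem_ED (R := R) (validE_up_right h1) (validD_up_J h2)
          (not_preceq_aug h3 (inter_aug hJ') (inter_self' hK') (inter_self' hJ)
            (inter_aug hK))
      · exact mem_ED (R := R) (validE_up_left h1) (validD_up_K h2)
          (not_preceq_aug h3 (inter_self' hJ') (inter_aug hK') (inter_aug hJ)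
            (inter_self' hK))
      · exact mem_ED (R := R) (validE_up_right h1) (validD_up_K h2)
          (not_preceq_aug h3 (inter_self' hJ') (inter_aug hK') (inter_self' hJ)
            (inter_aug hK))
    · -- D·D
      obtain ⟨hI, hJ, hK⟩ := validD_subs h1
      obtain ⟨hI', hJ', hK'⟩ := validD_subs h2
      rw [map_mul, Fre_reD R ℓ h1.1 h1.2.1 h1.2.2.1 h1.2.2.2.1 h1.2.2.2.2,
        Fre_reD R ℓ h2.1 h2.2.1 h2.2.2.1 h2.2.2.2.1 h2.2.2.2.2]
      simp only [mul_add, add_mul]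
      repeat' refine Ideal.add_mem _ ?_ ?_
      · exact mem_DD (R := R) (validD_up_I h1) (validD_up_I h2)
          (not_preceq_aug h3 (inter_self' hJ) (inter_self' hK) (inter_self' hJ') (inter_self' hK'))
          (not_preceq_aug h4 (inter_self' hJ') (inter_self' hK') (inter_self' hJ) (inter_self' hK))
          (not_union_subset_aug h5 (inter_self' hJ) (inter_self' hK) (inter_aug hI'))
      · exact mem_DD (R := R) (validD_up_J h1) (validD_up_I h2)
          (not_preceq_aug h3 (inter_aug hJ) (inter_self' hK) (inter_self' hJ') (inter_self' hK'))
          (not_preceq_aug h4 (inter_self' hJ') (inter_self' hK') (inter_aug hJ) (inter_self' hK))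
          (not_union_subset_aug h5 (inter_aug hJ) (inter_self' hK) (inter_aug hI'))
      · exact mem_DD (R := R) (validD_up_K h1) (validD_up_I h2)
          (not_preceq_aug h3 (inter_self' hJ) (inter_aug hK) (inter_self' hJ') (inter_self' hK'))
          (not_preceq_aug h4 (inter_self' hJ') (inter_self' hK') (inter_self' hJ) (inter_aug hK))
          (not_union_subset_aug h5 (inter_self' hJ) (inter_aug hK) (inter_aug hI'))
      · exact mem_DD (R := R) (validD_up_I h1) (validD_up_J h2)
          (not_preceq_aug h3 (inter_self' hJ) (inter_self' hK) (inter_aug hJ') (inter_self' hK'))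
          (not_preceq_aug h4 (inter_aug hJ') (inter_self' hK') (inter_self' hJ) (inter_self' hK))
          (not_union_subset_aug h5 (inter_self' hJ) (inter_self' hK) (inter_self' hI'))
      · exact mem_DD (R := R) (validD_up_J h1) (validD_up_J h2)
          (not_preceq_aug h3 (inter_aug hJ) (inter_self' hK) (inter_aug hJ') (inter_self' hK'))
          (not_preceq_aug h4 (inter_aug hJ') (inter_self' hK') (inter_aug hJ) (inter_self' hK))
          (not_union_subset_aug h5 (inter_aug hJ) (inter_self' hK) (inter_self' hI'))
      · exact mem_DD (R := R) (validD_up_K h1) (validD_up_J h2)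
          (not_preceq_aug h3 (inter_self' hJ) (inter_aug hK) (inter_aug hJ') (inter_self' hK'))
          (not_preceq_aug h4 (inter_aug hJ') (inter_self' hK') (inter_self' hJ) (inter_aug hK))
          (not_union_subset_aug h5 (inter_self' hJ) (inter_aug hK) (inter_self' hI'))
      · exact mem_DD (R := R) (validD_up_I h1) (validD_up_K h2)
          (not_preceq_aug h3 (inter_self' hJ) (inter_self' hK) (inter_self' hJ') (inter_aug hK'))
          (not_preceq_aug h4 (inter_self' hJ') (inter_aug hK') (inter_self' hJ) (inter_self' hK))
          (not_union_subset_aug h5 (inter_self' hJ) (inter_self' hK) (inter_self' hI'))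
      · exact mem_DD (R := R) (validD_up_J h1) (validD_up_K h2)
          (not_preceq_aug h3 (inter_aug hJ) (inter_self' hK) (inter_self' hJ') (inter_aug hK'))
          (not_preceq_aug h4 (inter_self' hJ') (inter_aug hK') (inter_aug hJ) (inter_self' hK))
          (not_union_subset_aug h5 (inter_aug hJ) (inter_self' hK) (inter_self' hI'))
      · exact mem_DD (R := R) (validD_up_K h1) (validD_up_K h2)
          (not_preceq_aug h3 (inter_self' hJ) (inter_aug hK) (inter_self' hJ') (inter_aug hK'))
          (not_preceq_aug h4 (inter_self' hJ') (inter_aug hK') (inter_self' hJ) (inter_aug hK))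
          (not_union_subset_aug h5 (inter_self' hJ) (inter_aug hK) (inter_self' hI'))
    · -- relEsum
      rw [Fre_relEsum R ℓ (by omega)]
      exact mem_esum R _
    · -- relE
      rw [Fre_relE R ℓ ha hb hc hab hac hbc]
      exact mem_relE (R := R) (Iset_mono ℓ ha) (Iset_mono ℓ hb) (Iset_mono ℓ hc) hab hac hbc
  exact key hx

end
end

section
/- Let ℓ≥3 be an integer and a,b,c ∈ [ℓ] with a≠b and a≠c. In the polynomial ring R_{0,[ℓ]} over ℚ, the element G_{abc} = Σ_{(I,{J,K})∈P̃•([ℓ]): a∈J, b∉I, c∈I} ε_{J,K}·ℝD_{I;J,K} − Σ_{(I,{J,K})∈P̃•([ℓ]): a∈J, b∈I, c∉I} ε_{J,K}·ℝD_{I;J,K} lies in the ℚ-linear span of the elements E^{[ℓ]}_{a'b'c'} over all triples of distinct a',b',c' ∈ [ℓ]; in particular G_{abc} ∈ I_{0,[ℓ]}. -/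
open MvPolynomial Finset TensorProduct

noncomputable section

lemma relG_eq_zero_aux (S : Finset ℕ) (a b : ℕ) : relG ℚ S a b b = 0 := by
  unfold relG
  simp only [not_and_self_iff, and_not_self_iff, and_false, if_false,
    Finset.sum_const_zero, sub_self]

lemma relG_eq_sub (S : Finset ℕ) (a b c : ℕ) (ha : a ∈ S) (hb : b ∈ S) (hc : c ∈ S) :
    relG ℚ S a b c = relE ℚ S b a c - relE ℚ S c a b := by
  unfold relG relE
  simp only [← Finset.sum_sub_distrib]
  refine Finset.sum_congr rfl fun I hI => ?_
  refine Finset.sum_congr rfl fun J hJ => ?_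
  have hIS : I ⊆ S := Finset.mem_powerset.1 hI
  have hJS : J ⊆ S \ I := Finset.mem_powerset.1 hJ
  have tri : ∀ x ∈ S, (x ∈ I ∧ x ∉ J ∧ x ∉ (S \ I) \ J) ∨
      (x ∉ I ∧ x ∈ J ∧ x ∉ (S \ I) \ J) ∨ (x ∉ I ∧ x ∉ J ∧ x ∈ (S \ I) \ J) := by
    intro x hx
    by_cases h1 : x ∈ I
    · exact Or.inl ⟨h1, fun h => (Finset.mem_sdiff.1 (hJS h)).2 h1,
        fun h => (Finset.mem_sdiff.1 (Finset.mem_sdiff.1 h).1).2 h1⟩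
    by_cases h2 : x ∈ J
    · exact Or.inr (Or.inl ⟨h1, h2, fun h => (Finset.mem_sdiff.1 h).2 h2⟩)
    · exact Or.inr (Or.inr ⟨h1, h2,
        Finset.mem_sdiff.2 ⟨Finset.mem_sdiff.2 ⟨hx, h1⟩, h2⟩⟩)
  rcases tri a ha with ⟨ha1, ha2, ha3⟩ | ⟨ha1, ha2, ha3⟩ | ⟨ha1, ha2, ha3⟩ <;>
    rcases tri b hb with ⟨hb1, hb2, hb3⟩ | ⟨hb1, hb2, hb3⟩ | ⟨hb1, hb2, hb3⟩ <;>
    rcases tri c hc with ⟨hc1, hc2, hc3⟩ | ⟨hc1, hc2, hc3⟩ | ⟨hc1, hc2, hc3⟩ <;>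
    simp [ha1, ha2, ha3, hb1, hb2, hb3, hc1, hc2, hc3]

/-- The element `G_{abc}` lies in the ℚ-linear span of the elements
`E^{[ℓ]}_{a'b'c'}`; in particular `G_{abc} ∈ I_{0,[ℓ]}`. -/
theorem stmt9 (ℓ : ℕ) (hℓ : 3 ≤ ℓ) (a b c : ℕ)
    (ha : a ∈ Iset ℓ) (hb : b ∈ Iset ℓ) (hc : c ∈ Iset ℓ) (hab : a ≠ b) (hac : a ≠ c) :
    relG ℚ (Iset ℓ) a b c ∈ Submodule.span ℚ
      {x : RRing ℚ (Iset ℓ) | ∃ a' b' c' : ℕ, a' ∈ Iset ℓ ∧ b' ∈ Iset ℓ ∧ c' ∈ Iset ℓ ∧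
        a' ≠ b' ∧ a' ≠ c' ∧ b' ≠ c' ∧ x = relE ℚ (Iset ℓ) a' b' c'} ∧
    relG ℚ (Iset ℓ) a b c ∈ reIdeal ℚ (Iset ℓ) := by
  by_cases hbc : b = c
  · subst hbc
    rw [relG_eq_zero_aux]
    exact ⟨Submodule.zero_mem _, Submodule.zero_mem _⟩
  · rw [relG_eq_sub (Iset ℓ) a b c ha hb hc]
    have h1 : relE ℚ (Iset ℓ) b a c ∈
        {x : RRing ℚ (Iset ℓ) | ∃ a' b' c' : ℕ, a' ∈ Iset ℓ ∧ b' ∈ Iset ℓ ∧ c' ∈ Iset ℓ ∧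
          a' ≠ b' ∧ a' ≠ c' ∧ b' ≠ c' ∧ x = relE ℚ (Iset ℓ) a' b' c'} :=
      ⟨b, a, c, hb, ha, hc, fun h => hab h.symm, hbc, hac, rfl⟩
    have h2 : relE ℚ (Iset ℓ) c a b ∈
        {x : RRing ℚ (Iset ℓ) | ∃ a' b' c' : ℕ, a' ∈ Iset ℓ ∧ b' ∈ Iset ℓ ∧ c' ∈ Iset ℓ ∧
          a' ≠ b' ∧ a' ≠ c' ∧ b' ≠ c' ∧ x = relE ℚ (Iset ℓ) a' b' c'} :=
      ⟨c, a, b, hc, ha, hb, fun h => hac h.symm, fun h => hbc h.symm, hab, rfl⟩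
    constructor
    · exact Submodule.sub_mem _ (Submodule.subset_span h1) (Submodule.subset_span h2)
    · have g1 : relE ℚ (Iset ℓ) b a c ∈ reIdeal ℚ (Iset ℓ) :=
        Ideal.subset_span (Set.mem_union_right _
          ⟨b, a, c, hb, ha, hc, fun h => hab h.symm, hbc, hac, rfl⟩)
      have g2 : relE ℚ (Iset ℓ) c a b ∈ reIdeal ℚ (Iset ℓ) :=
        Ideal.subset_span (Set.mem_union_right _
          ⟨c, a, b, hc, ha, hb, fun h => hac h.symm, fun h => hbc h.symm, hab, rfl⟩)
      exact Ideal.sub_mem _ g1 g2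


end
end
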